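/- Let n ≥ 1, h > 0, K > 0, C₀ > 0 and δt > 0 with δt ≤ C₀·h. Let S ⊆ ℝⁿ be a nonempty bounded convex measurable set of diameter at most h, and let I ⊆ ℝ be a nonempty compact interval of length at most 2·δt. Let ϖ : ℝ × ℝⁿ → (0,∞) be C¹ and satisfy |∂ₜϖ(t,x)| + ‖∇ₓϖ(t,x)‖ ≤ (K·√h)^{−1}·ϖ(t,x) for all (t,x) ∈ ℝ × ℝⁿ. If (1 + 2·C₀)·√h/K ≤ 1/2, then for every v ∈ L²(S): ( sup_{(t,x) ∈ I × S} ϖ(t,x) )·‖v‖_{L²(S)} ≤ 2·inf_{t ∈ I} ‖ϖ(t,·)·v‖_{L²(S)}. -/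

import Mathlib

open MeasureTheory

set_option maxHeartbeats 1000000 in
/-- Key ratio bound: the slowly varying weight varies by at most a factor 2
between two points at time-distance ≤ 2δt and space-distance ≤ h. -/
lemma weight_ratio_bound {n : ℕ}
    (h K C₀ δt : ℝ) (hh : 0 < h) (hK : 0 < K) (hC₀ : 0 < C₀)
    (hδt : 0 < δt) (hδth : δt ≤ C₀ * h)
    (ϖ : ℝ × EuclideanSpace ℝ (Fin n) → ℝ) (hϖ : ContDiff ℝ 1 ϖ)
    (hϖpos : ∀ p, 0 < ϖ p)
    (hϖslow : ∀ (t : ℝ) (x : EuclideanSpace ℝ (Fin n)),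
      |deriv (fun s => ϖ (s, x)) t| + ‖fderiv ℝ (fun y => ϖ (t, y)) x‖ ≤
        (K * Real.sqrt h)⁻¹ * ϖ (t, x))
    (hsmall : (1 + 2 * C₀) * Real.sqrt h / K ≤ 1 / 2)
    (p q : ℝ × EuclideanSpace ℝ (Fin n))
    (htdist : |p.1 - q.1| ≤ 2 * δt) (hxdist : ‖p.2 - q.2‖ ≤ h) :
    ϖ p ≤ 2 * ϖ q := by
  have hdiff : Differentiable ℝ ϖ := hϖ.differentiable one_ne_zero
  have hsqrt : 0 < Real.sqrt h := Real.sqrt_pos.mpr hh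
  have hsq : Real.sqrt h * Real.sqrt h = h := Real.mul_self_sqrt hh.le
  -- the key derivative bound at an arbitrary point
  have key : ∀ z : ℝ × EuclideanSpace ℝ (Fin n),
      |fderiv ℝ ϖ z (p - q)| ≤ (1 / 2) * ϖ z := by
    intro z
    set D := fderiv ℝ ϖ z with hD
    set Dx := D.comp (ContinuousLinearMap.inr ℝ ℝ (EuclideanSpace ℝ (Fin n))) with hDx
    -- time partial derivative
    have h1 : HasDerivAt (fun s => ϖ (s, z.2)) (D (1, 0)) z.1 := by
      have hcomp := (hdiff (z.1, z.2)).hasFDerivAt.comp_hasDerivAt z.1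
        ((hasDerivAt_id z.1).prodMk (hasDerivAt_const z.1 z.2))
      exact hcomp
    have hderivt : deriv (fun s => ϖ (s, z.2)) z.1 = D (1, 0) := h1.deriv
    -- space partial derivative
    have h2 : HasFDerivAt (fun y => ϖ (z.1, y)) Dx z.2 := by
      have hcomp := (hdiff (z.1, z.2)).hasFDerivAt.comp z.2
        (hasFDerivAt_prodMk_right z.1 z.2)
      exact hcomp
    have hfderivx : fderiv ℝ (fun y => ϖ (z.1, y)) z.2 = Dx := h2.fderiv
    set τ : ℝ := p.1 - q.1 with hτ
    set ξ : EuclideanSpace ℝ (Fin n) := p.2 - q.2 with hξ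
    have hsplit : (p - q : ℝ × EuclideanSpace ℝ (Fin n)) =
        τ • ((1 : ℝ), (0 : EuclideanSpace ℝ (Fin n))) + ((0 : ℝ), ξ) := by
      simp [Prod.ext_iff, hτ, hξ, Prod.smul_mk]
    have hval : D (p - q) = τ * D (1, 0) + Dx ξ := by
      rw [hsplit, map_add, D.map_smul]
      simp [smul_eq_mul, hDx]
    set A := |deriv (fun s => ϖ (s, z.2)) z.1| with hA
    set B := ‖fderiv ℝ (fun y => ϖ (z.1, y)) z.2‖ with hB
    have hBx : B = ‖Dx‖ := by rw [hB, hfderivx]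
    have hAB : A + B ≤ (K * Real.sqrt h)⁻¹ * ϖ (z.1, z.2) := hϖslow z.1 z.2
    have hAderiv : |D (1, 0)| = A := by rw [hA, hderivt]
    have hbd1 : |τ * D (1, 0)| ≤ 2 * δt * A := by
      rw [abs_mul, hAderiv]
      exact mul_le_mul_of_nonneg_right htdist (abs_nonneg _)
    have hbd2 : |Dx ξ| ≤ h * B := by
      rw [← Real.norm_eq_abs]
      refine le_trans (Dx.le_opNorm ξ) ?_
      rw [hBx, mul_comm]
      exact mul_le_mul_of_nonneg_right hxdist (norm_nonneg _)
    have hABnn : 0 ≤ A := abs_nonneg _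
    have hBnn : 0 ≤ B := norm_nonneg _
    have htotal : |D (p - q)| ≤ (A + B) * (2 * δt + h) := by
      rw [hval]
      calc |τ * D (1,0) + Dx ξ| ≤ |τ * D (1,0)| + |Dx ξ| := abs_add_le _ _
        _ ≤ 2 * δt * A + h * B := add_le_add hbd1 hbd2
        _ ≤ (A + B) * (2 * δt + h) := by
            have hx1 : 0 ≤ 2 * δt * B := by positivity
            have hx2 : 0 ≤ h * A := by positivity
            have hexpand : (A + B) * (2 * δt + h) =
                2 * δt * A + h * B + (2 * δt * B + h * A) := by ring
            linarith
    have hz : z = (z.1, z.2) := rfl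
    have hpos := hϖpos z
    have hfac : (K * Real.sqrt h)⁻¹ * (2 * δt + h) ≤ 1 / 2 := by
      rw [inv_mul_le_iff₀ (by positivity)]
      have h1 : (1 + 2 * C₀) * Real.sqrt h ≤ K / 2 := by
        rw [div_le_iff₀ hK] at hsmall
        linarith
      nlinarith [hsqrt.le]
    calc |D (p - q)| ≤ (A + B) * (2 * δt + h) := htotal
      _ ≤ ((K * Real.sqrt h)⁻¹ * ϖ z) * (2 * δt + h) := by
          have hnn : (0:ℝ) ≤ 2 * δt + h := by positivity
          have h' : A + B ≤ (K * Real.sqrt h)⁻¹ * ϖ z := by rw [hz]; exact hAB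
          exact mul_le_mul_of_nonneg_right h' hnn
      _ = ((K * Real.sqrt h)⁻¹ * (2 * δt + h)) * ϖ z := by ring
      _ ≤ (1 / 2) * ϖ z := mul_le_mul_of_nonneg_right hfac hpos.le
  -- move along the segment
  set γ : ℝ → ℝ × EuclideanSpace ℝ (Fin n) := fun r => q + r • (p - q) with hγdef
  set g : ℝ → ℝ := fun r => Real.log (ϖ (γ r)) with hgdef
  set g' : ℝ → ℝ := fun r => fderiv ℝ ϖ (γ r) (p - q) / ϖ (γ r) with hg'def
  have hg : ∀ r : ℝ, HasDerivAt g (g' r) r := by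
    intro r
    have hγ : HasDerivAt γ (p - q) r := by
      have h0 := ((hasDerivAt_id r).smul_const (p - q)).const_add q
      simp only [one_smul] at h0
      exact h0
    have hϖγ : HasDerivAt (fun r => ϖ (γ r)) (fderiv ℝ ϖ (γ r) (p - q)) r :=
      (hdiff (γ r)).hasFDerivAt.comp_hasDerivAt r hγ
    exact hϖγ.log (ne_of_gt (hϖpos _))
  have hbound : ∀ r : ℝ, ‖g' r‖ ≤ 1 / 2 := by
    intro r
    have hpos := hϖpos (γ r)
    have := key (γ r)
    rw [hg'def]
    simp only [Real.norm_eq_abs, abs_div, abs_of_pos hpos]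
    rw [div_le_iff₀ hpos]
    linarith
  have hmvt : ‖g 1 - g 0‖ ≤ (1 / 2) * ‖(1 : ℝ) - 0‖ :=
    convex_univ.norm_image_sub_le_of_norm_hasDerivWithin_le
      (fun x _ => (hg x).hasDerivWithinAt) (fun x _ => hbound x)
      (Set.mem_univ 0) (Set.mem_univ 1)
  have hγ1 : γ 1 = p := by simp [hγdef]
  have hγ0 : γ 0 = q := by simp [hγdef]
  have hlog : Real.log (ϖ p) - Real.log (ϖ q) ≤ 1 / 2 := by
    have := hmvt
    rw [hgdef] at this
    simp only [hγ1, hγ0, Real.norm_eq_abs] at this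
    have := abs_le.mp (by simpa using this)
    linarith [this.2]
  have hexp2 : Real.exp (1 / 2) ≤ 2 := by
    have h4 : Real.exp 1 < 4 := lt_trans Real.exp_one_lt_d9 (by norm_num)
    have hsq2 : Real.exp (1/2) * Real.exp (1/2) = Real.exp 1 := by
      rw [← Real.exp_add]; norm_num
    nlinarith [Real.exp_pos (1/2 : ℝ)]
  have : ϖ p ≤ Real.exp (1 / 2) * ϖ q := by
    have h1 : ϖ p = Real.exp (Real.log (ϖ p)) := (Real.exp_log (hϖpos p)).symm
    have h2 : ϖ q = Real.exp (Real.log (ϖ q)) := (Real.exp_log (hϖpos q)).symm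
    rw [h1, h2, ← Real.exp_add]
    exact Real.exp_le_exp.mpr (by linarith)
  calc ϖ p ≤ Real.exp (1 / 2) * ϖ q := this
    _ ≤ 2 * ϖ q := mul_le_mul_of_nonneg_right hexp2 (hϖpos q).le

/-- The weight-moving inequality: a slowly varying positive weight whose
space–time logarithmic derivative is of size (K√h)⁻¹ can be moved in and out of
L² norms over a mesh element S of diameter ≤ h and a time window of length
≤ 2δt (δt ≤ C₀h), at the price of a factor 2. -/
theorem weight_moving_inequality {n : ℕ} (hn : 1 ≤ n)
    (h K C₀ δt : ℝ) (hh : 0 < h) (hK : 0 < K) (hC₀ : 0 < C₀)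
    (hδt : 0 < δt) (hδth : δt ≤ C₀ * h)
    (S : Set (EuclideanSpace ℝ (Fin n))) (hS : S.Nonempty)
    (hSbdd : Bornology.IsBounded S) (hSconv : Convex ℝ S)
    (hSmeas : MeasurableSet S) (hdiam : Metric.diam S ≤ h)
    (a b : ℝ) (hab : a ≤ b) (hlen : b - a ≤ 2 * δt)
    (ϖ : ℝ × EuclideanSpace ℝ (Fin n) → ℝ) (hϖ : ContDiff ℝ 1 ϖ)
    (hϖpos : ∀ p, 0 < ϖ p)
    (hϖslow : ∀ (t : ℝ) (x : EuclideanSpace ℝ (Fin n)),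
      |deriv (fun s => ϖ (s, x)) t| + ‖fderiv ℝ (fun y => ϖ (t, y)) x‖ ≤
        (K * Real.sqrt h)⁻¹ * ϖ (t, x))
    (hsmall : (1 + 2 * C₀) * Real.sqrt h / K ≤ 1 / 2)
    (v : EuclideanSpace ℝ (Fin n) → ℝ)
    (hv : MemLp v 2 (volume.restrict S)) :
    sSup (ϖ '' (Set.Icc a b ×ˢ S)) * Real.sqrt (∫ x in S, (v x) ^ 2) ≤
      2 * sInf ((fun t => Real.sqrt (∫ x in S, (ϖ (t, x) * v x) ^ 2)) ''
        Set.Icc a b) := by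
  obtain ⟨x₀, hx₀⟩ := hS
  -- the ratio bound specialized
  have ratio : ∀ (t s : ℝ) (x y : EuclideanSpace ℝ (Fin n)),
      |t - s| ≤ 2 * δt → x ∈ S → y ∈ S → ϖ (t, x) ≤ 2 * ϖ (s, y) := by
    intro t s x y htd hx hy
    refine weight_ratio_bound h K C₀ δt hh hK hC₀ hδt hδth ϖ hϖ hϖpos hϖslow hsmall
      (t, x) (s, y) htd ?_
    have : dist x y ≤ h := le_trans (Metric.dist_le_diam_of_mem hSbdd hx hy) hdiam
    simpa [dist_eq_norm] using this
  -- distance of times in [a,b]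
  have htimes : ∀ t ∈ Set.Icc a b, ∀ s ∈ Set.Icc a b, |t - s| ≤ 2 * δt := by
    intro t ht s hs
    rw [abs_sub_le_iff]
    constructor <;> linarith [ht.1, ht.2, hs.1, hs.2]
  set Msup := sSup (ϖ '' (Set.Icc a b ×ˢ S)) with hM
  have hne : (ϖ '' (Set.Icc a b ×ˢ S)).Nonempty :=
    ⟨ϖ (a, x₀), ⟨(a, x₀), ⟨⟨le_refl a, hab⟩, hx₀⟩, rfl⟩⟩
  have hbdd : BddAbove (ϖ '' (Set.Icc a b ×ˢ S)) := by
    refine ⟨2 * ϖ (a, x₀), ?_⟩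
    rintro _ ⟨⟨t, x⟩, ⟨htI, hxS⟩, rfl⟩
    exact ratio t a x x₀ (htimes t htI a ⟨le_refl a, hab⟩) hxS hx₀
  have hMpos : 0 < Msup :=
    lt_of_lt_of_le (hϖpos (a, x₀)) (le_csSup hbdd ⟨(a, x₀), ⟨⟨le_refl a, hab⟩, hx₀⟩, rfl⟩)
  -- Msup ≤ 2 ϖ(t,x) for (t,x) ∈ I × S
  have hMle : ∀ t ∈ Set.Icc a b, ∀ x ∈ S, Msup ≤ 2 * ϖ (t, x) := by
    intro t ht x hx
    refine csSup_le hne ?_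
    rintro _ ⟨⟨s, y⟩, ⟨hsI, hyS⟩, rfl⟩
    exact ratio s t y x (htimes s hsI t ht) hyS hx
  -- integrability
  have hvm : AEStronglyMeasurable v (volume.restrict S) := hv.aestronglyMeasurable
  have hI1 : Integrable (fun x => v x ^ 2) (volume.restrict S) := hv.integrable_sq
  have hIconst : ∀ c : ℝ, Integrable (fun x => (c * v x) ^ 2) (volume.restrict S) := by
    intro c
    have := hI1.const_mul (c ^ 2)
    refine this.congr (Filter.Eventually.of_forall fun x => ?_)
    ring
  have hϖcont : ∀ t : ℝ, Continuous (fun x : EuclideanSpace ℝ (Fin n) => ϖ (t, x)) :=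
    fun t => hϖ.continuous.comp (continuous_const.prodMk continuous_id)
  have hI2 : ∀ t ∈ Set.Icc a b,
      Integrable (fun x => (ϖ (t, x) * v x) ^ 2) (volume.restrict S) := by
    intro t ht
    have hCt : ∀ x ∈ S, ϖ (t, x) ≤ 2 * ϖ (t, x₀) := fun x hx =>
      ratio t t x x₀ (by simpa using (mul_pos two_pos hδt).le) hx hx₀
    have hmeas : AEStronglyMeasurable (fun x => (ϖ (t, x) * v x) ^ 2) (volume.restrict S) := by
      have hm := ((hϖcont t).aestronglyMeasurable.restrict.mul hvm)
      exact hm.pow 2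
    refine Integrable.mono' (hIconst (2 * ϖ (t, x₀))) hmeas ?_
    rw [ae_restrict_iff' hSmeas]
    refine Filter.Eventually.of_forall fun x hx => ?_
    have h1 := hCt x hx
    have h2 := hϖpos (t, x)
    have h3 := hϖpos (t, x₀)
    rw [Real.norm_eq_abs, abs_of_nonneg (sq_nonneg _), mul_pow, mul_pow]
    exact mul_le_mul_of_nonneg_right (pow_le_pow_left₀ h2.le h1 2) (sq_nonneg _)
  -- the per-time bound
  have hper : ∀ t ∈ Set.Icc a b,
      Msup / 2 * Real.sqrt (∫ x in S, v x ^ 2) ≤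
        Real.sqrt (∫ x in S, (ϖ (t, x) * v x) ^ 2) := by
    intro t ht
    have hint : ∫ x in S, (Msup / 2 * v x) ^ 2 ≤ ∫ x in S, (ϖ (t, x) * v x) ^ 2 := by
      refine setIntegral_mono_on (hIconst (Msup / 2)) (hI2 t ht) hSmeas fun x hx => ?_
      have h1 := hMle t ht x hx
      have h2 := hϖpos (t, x)
      rw [mul_pow, mul_pow]
      exact mul_le_mul_of_nonneg_right
        (pow_le_pow_left₀ (by positivity) (by linarith) 2) (sq_nonneg _)
    have heq : ∫ x in S, (Msup / 2 * v x) ^ 2 = (Msup / 2) ^ 2 * ∫ x in S, v x ^ 2 := by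
      rw [← integral_const_mul]
      congr 1; funext x; ring
    calc Msup / 2 * Real.sqrt (∫ x in S, v x ^ 2)
        = Real.sqrt ((Msup / 2) ^ 2 * ∫ x in S, v x ^ 2) := by
          rw [Real.sqrt_mul (sq_nonneg _), Real.sqrt_sq (by positivity : (0:ℝ) ≤ Msup / 2)]
      _ = Real.sqrt (∫ x in S, (Msup / 2 * v x) ^ 2) := by rw [heq]
      _ ≤ Real.sqrt (∫ x in S, (ϖ (t, x) * v x) ^ 2) := Real.sqrt_le_sqrt hint
  -- conclude via sInf
  have hinfge : Msup / 2 * Real.sqrt (∫ x in S, v x ^ 2) ≤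
      sInf ((fun t => Real.sqrt (∫ x in S, (ϖ (t, x) * v x) ^ 2)) '' Set.Icc a b) := by
    refine le_csInf ⟨_, ⟨a, ⟨le_refl a, hab⟩, rfl⟩⟩ ?_
    rintro _ ⟨t, ht, rfl⟩
    exact hper t ht
  linarith
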